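/- For γ ≥ 1, the function f̃_d(τ) := τ²(τ² - 1)(h'(τ))² - 2h(τ) satisfies f̃_d(1) = 0 and f̃_d'(τ) = 2h'(τ)((γ-1)τ(τ²-1)h'(τ) + τ^(γ+1) - 1) > 0 for τ > 1; consequently f̃_d(τ) > 0 for all τ > 1. -/

import Mathlib

/-- Polytropic enthalpy: `h(τ) = (τ^(γ-1) - 1)/(γ-1)` for `γ > 1`, `log τ` for `γ = 1`. -/
noncomputable def enthalpy (γ τ : ℝ) : ℝ :=
  if γ = 1 then Real.log τ else (τ ^ (γ - 1) - 1) / (γ - 1)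

/-- `f̃_d(τ) = τ²(τ²-1)(h'(τ))² - 2h(τ)` with `h'(τ) = τ^(γ-2)`. -/
noncomputable def ftildeD (γ τ : ℝ) : ℝ :=
  τ ^ 2 * (τ ^ 2 - 1) * (τ ^ (γ - 2)) ^ 2 - 2 * enthalpy γ τ

lemma enthalpy_one (γ : ℝ) : enthalpy γ 1 = 0 := by
  unfold enthalpy
  split <;> simp

lemma hasDerivAt_enthalpy (γ : ℝ) {x : ℝ} (hx : 0 < x) :
    HasDerivAt (enthalpy γ) (x ^ (γ - 2)) x := by
  by_cases h1 : γ = 1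
  · have he : enthalpy γ = fun t => Real.log t := by
      funext t; simp [enthalpy, h1]
    rw [he, h1]
    have := Real.hasDerivAt_log hx.ne'
    convert this using 1
    rw [show (1:ℝ) - 2 = -1 by norm_num, Real.rpow_neg_one]
  · have he : enthalpy γ = fun t => (t ^ (γ - 1) - 1) / (γ - 1) := by
      funext t; simp [enthalpy, h1]
    rw [he]
    have hd : HasDerivAt (fun t : ℝ => t ^ (γ - 1)) ((γ - 1) * x ^ (γ - 1 - 1)) x :=
      Real.hasDerivAt_rpow_const (Or.inl hx.ne')
    have h2 := (hd.sub_const 1).div_const (γ - 1)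
    convert h2 using 1
    case e'_4 => rfl
    case e'_5 => rfl
    have hne : γ - 1 ≠ 0 := sub_ne_zero.mpr h1
    rw [show γ - 1 - 1 = γ - 2 by ring]
    field_simp

lemma rpow_split (γ : ℝ) {x : ℝ} (hx : 0 < x) (a : ℝ) (n : ℕ) (hn : a + n = γ) :
    x ^ γ = x ^ a * x ^ n := by
  rw [← hn, Real.rpow_add hx, Real.rpow_natCast]

/-- For `γ ≥ 1`: `f̃_d(1) = 0`,
`f̃_d'(τ) = 2h'(τ)((γ-1)τ(τ²-1)h'(τ) + τ^(γ+1) - 1) > 0` for `τ > 1`,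
and consequently `f̃_d(τ) > 0` for all `τ > 1`. -/
theorem ftildeD_props (γ : ℝ) (hγ : 1 ≤ γ) :
    ftildeD γ 1 = 0 ∧
    (∀ τ : ℝ, 1 < τ →
      HasDerivAt (ftildeD γ)
        (2 * τ ^ (γ - 2) * ((γ - 1) * τ * (τ ^ 2 - 1) * τ ^ (γ - 2) + τ ^ (γ + 1) - 1)) τ ∧
      0 < 2 * τ ^ (γ - 2) * ((γ - 1) * τ * (τ ^ 2 - 1) * τ ^ (γ - 2) + τ ^ (γ + 1) - 1)) ∧
    (∀ τ : ℝ, 1 < τ → 0 < ftildeD γ τ) := by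
  have hval : ftildeD γ 1 = 0 := by
    simp [ftildeD, enthalpy_one]
  have hderiv : ∀ x : ℝ, 0 < x →
      HasDerivAt (ftildeD γ)
        (2 * x ^ (γ - 2) * ((γ - 1) * x * (x ^ 2 - 1) * x ^ (γ - 2) + x ^ (γ + 1) - 1)) x := by
    intro x hx
    have hA : HasDerivAt (fun t : ℝ => t ^ (γ - 2)) ((γ - 2) * x ^ (γ - 2 - 1)) x :=
      Real.hasDerivAt_rpow_const (Or.inl hx.ne')
    have hA2 := hA.pow 2
    have hp2 : HasDerivAt (fun t : ℝ => t ^ 2) ((2 : ℕ) * x ^ (2 - 1)) x := hasDerivAt_pow 2 x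
    have hq : HasDerivAt (fun t : ℝ => t ^ 2 - 1) ((2 : ℕ) * x ^ (2 - 1)) x := hp2.sub_const 1
    have hmain := (hp2.mul hq).mul hA2
    have hh := (hasDerivAt_enthalpy γ hx).const_mul 2
    have := hmain.sub hh
    convert this using 1
    case e'_4 => rfl
    case e'_5 => rfl
    case e'_8 => funext t; rfl
    simp only [Pi.mul_apply, Pi.pow_apply]
    rw [show γ - 2 - 1 = γ - 3 by ring]
    rw [show x ^ (γ - 2) = x ^ (γ - 3) * x ^ 1 from rpow_split (γ - 2) hx (γ - 3) 1 (by push_cast; ring),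
        show x ^ (γ + 1) = x ^ (γ - 3) * x ^ 4 from rpow_split (γ + 1) hx (γ - 3) 4 (by push_cast; ring)]
    push_cast
    ring
  have hpos : ∀ τ : ℝ, 1 < τ →
      0 < 2 * τ ^ (γ - 2) * ((γ - 1) * τ * (τ ^ 2 - 1) * τ ^ (γ - 2) + τ ^ (γ + 1) - 1) := by
    intro τ hτ
    have hτ0 : (0 : ℝ) < τ := lt_trans one_pos hτ
    have hA : (0 : ℝ) < τ ^ (γ - 2) := Real.rpow_pos_of_pos hτ0 _
    have h1 : (0 : ℝ) ≤ (γ - 1) * τ * (τ ^ 2 - 1) * τ ^ (γ - 2) := by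
      have : (0:ℝ) ≤ τ ^ 2 - 1 := by nlinarith
      have hγ1 : (0:ℝ) ≤ γ - 1 := by linarith
      positivity
    have h2 : (1 : ℝ) < τ ^ (γ + 1) :=
      Real.one_lt_rpow_iff_of_pos hτ0 |>.mpr (Or.inl ⟨hτ, by linarith⟩)
    have hinner : 0 < (γ - 1) * τ * (τ ^ 2 - 1) * τ ^ (γ - 2) + τ ^ (γ + 1) - 1 := by
      linarith
    positivity
  refine ⟨hval, fun τ hτ => ⟨hderiv τ (lt_trans one_pos hτ), hpos τ hτ⟩, ?_⟩
  have hcont : ContinuousOn (ftildeD γ) (Set.Ici 1) := by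
    have hne : ∀ t ∈ Set.Ici (1:ℝ), t ≠ 0 := fun t ht => by
      have : (1:ℝ) ≤ t := ht; positivity
    have hA : ContinuousOn (fun t : ℝ => t ^ (γ - 2)) (Set.Ici 1) :=
      ContinuousOn.rpow_const continuousOn_id (fun t ht => Or.inl (hne t ht))
    have hh : ContinuousOn (enthalpy γ) (Set.Ici 1) := by
      unfold enthalpy
      split
      · exact Real.continuousOn_log.mono (fun t ht => hne t ht)
      · exact ((ContinuousOn.rpow_const continuousOn_id
          (fun t ht => Or.inl (hne t ht))).sub continuousOn_const).div_const _
    exact (((continuousOn_id.pow 2).mul ((continuousOn_id.pow 2).sub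
      continuousOn_const)).mul (hA.pow 2)).sub (continuousOn_const.mul hh)
  have hmono : StrictMonoOn (ftildeD γ) (Set.Ici 1) := by
    apply strictMonoOn_of_deriv_pos (convex_Ici 1) hcont
    intro t ht
    rw [interior_Ici] at ht
    have ht1 : (1:ℝ) < t := ht
    rw [(hderiv t (lt_trans one_pos ht1)).deriv]
    exact hpos t ht1
  intro τ hτ
  have := hmono (Set.self_mem_Ici) (le_of_lt hτ) hτ
  rwa [hval] at this
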